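/- arXiv:2302.05784 — 6 statements merged into one kernel-verified Lean document; each statement's English description precedes it below -/
import Mathlib

section
/- Let d and d' be odd positive integers with d ≥ 3 and d dividing d'. Then ω(d)/φ(d) ≥ ω(d')/φ(d'), where ω counts the number of distinct prime divisors and φ is Euler's totient function. -/
lemma omega_div_totient_step (p m : ℕ) (hp : p.Prime) (hpodd : Odd p) (h3 : 3 ≤ m) :
    ((p*m).primeFactors.card : ℚ) / (p*m).totient ≤ (m.primeFactors.card : ℚ) / m.totient := by
  have hm0 : 0 < m := by omega
  have hφ : 0 < m.totient := Nat.totient_pos.2 hm0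
  have hω : 1 ≤ m.primeFactors.card :=
    Finset.card_pos.2 (Nat.nonempty_primeFactors.2 (by omega))
  have hp2 : p ≠ 2 := fun h => (by decide : ¬ Odd 2) (h ▸ hpodd)
  have hp3 : 3 ≤ p := by have := hp.two_le; omega
  by_cases hdvd : p ∣ m
  · rw [Nat.totient_mul_of_prime_of_dvd hp hdvd]
    have hpf : (p*m).primeFactors = m.primeFactors := by
      rw [Nat.primeFactors_mul hp.pos.ne' hm0.ne', hp.primeFactors]
      exact Finset.insert_eq_self.2 (Nat.mem_primeFactors.2 ⟨hp, hdvd, hm0.ne'⟩)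
    rw [hpf]
    push_cast
    gcongr
    have ha : (0:ℚ) < m.totient := by exact_mod_cast hφ
    have hb : (3:ℚ) ≤ p := by exact_mod_cast hp3
    nlinarith
  · have hcop : Nat.Coprime p m := (Nat.Prime.coprime_iff_not_dvd hp).2 hdvd
    rw [Nat.totient_mul hcop, Nat.totient_prime hp]
    have hpf : (p*m).primeFactors = insert p m.primeFactors := by
      rw [Nat.primeFactors_mul hp.pos.ne' hm0.ne', hp.primeFactors]
      rfl
    have hpm : p ∉ m.primeFactors := fun h => hdvd (Nat.dvd_of_mem_primeFactors h)
    rw [hpf, Finset.card_insert_of_notMem hpm]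
    have hp1 : 1 ≤ p := hp.one_le
    have hd1 : (0:ℚ) < ((p-1) * m.totient : ℕ) := by
      exact_mod_cast Nat.mul_pos (by omega) hφ
    rw [div_le_div_iff₀ hd1 (by exact_mod_cast hφ)]
    push_cast [Nat.cast_sub hp1]
    have h1 : (1:ℚ) ≤ m.primeFactors.card := by exact_mod_cast hω
    have h2 : (3:ℚ) ≤ p := by exact_mod_cast hp3
    have h3 : (0:ℚ) < m.totient := by exact_mod_cast hφ
    have key : (↑m.primeFactors.card + 1 : ℚ) ≤ ↑m.primeFactors.card * (↑p - 1) := by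
      nlinarith
    nlinarith

theorem omega_div_totient_antitone_on_odd (d d' : ℕ) (hd : Odd d) (hd' : Odd d')
    (h3 : 3 ≤ d) (hdvd : d ∣ d') :
    (d'.primeFactors.card : ℚ) / d'.totient ≤ (d.primeFactors.card : ℚ) / d.totient := by
  revert hd' hdvd
  induction d' using Nat.strong_induction_on with
  | _ d' ih =>
    intro hd' hdvd
    rcases eq_or_ne d' d with rfl | hne
    · exact le_refl _
    · have hd'0 : 0 < d' := hd'.pos
      have hle : d ≤ d' := Nat.le_of_dvd hd'0 hdvd
      have hlt : d < d' := lt_of_le_of_ne hle (Ne.symm hne)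
      have hq : 1 < d' / d := by
        rcases hdvd with ⟨k, rfl⟩
        rw [Nat.mul_div_cancel_left _ (by omega)]
        rcases Nat.lt_or_ge k 2 with h | h
        · interval_cases k <;> omega
        · omega
      obtain ⟨p, hp, hpd⟩ := (d' / d).exists_prime_and_dvd (by omega)
      have hpd' : p ∣ d' := hpd.trans (Nat.div_dvd_of_dvd hdvd)
      have hpodd : Odd p := hp.odd_of_ne_two (by
        rintro rfl
        obtain ⟨k, rfl⟩ := hpd'
        rw [Nat.odd_iff, Nat.mul_mod_right] at hd'
        omega)
      set m := d' / p with hm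
      have hmd' : p * m = d' := Nat.mul_div_cancel' hpd'
      have hdm : d ∣ m := by
        obtain ⟨k, hk⟩ := hpd
        obtain ⟨j, hj⟩ := hdvd
        have : d' = d * (p * k) := by
          rw [hj]; congr 1
          rw [hj, Nat.mul_div_cancel_left _ (by omega)] at hk
          exact hk
        refine ⟨k, ?_⟩
        have : p * m = p * (d * k) := by rw [hmd', this]; ring
        exact Nat.eq_of_mul_eq_mul_left hp.pos this
      have hmodd : Odd m := by
        obtain ⟨k, hk⟩ := hdm
        rcases Nat.even_or_odd m with he | ho
        · exfalso
          have : Even d' := by rw [← hmd']; exact he.mul_left p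
          exact (Nat.not_odd_iff_even.2 this) hd'
        · exact ho
      have hm0 : 0 < m := by
        rcases Nat.eq_zero_or_pos m with h | h
        · rw [h, mul_zero] at hmd'; omega
        · exact h
      have hmlt : m < d' := by
        calc m = 1 * m := (one_mul m).symm
          _ < p * m := (Nat.mul_lt_mul_right hm0).2 hp.one_lt
          _ = d' := hmd'
      have h3m : 3 ≤ m := le_trans h3 (Nat.le_of_dvd hm0 hdm)
      calc (d'.primeFactors.card : ℚ) / d'.totient
          = ((p*m).primeFactors.card : ℚ) / (p*m).totient := by rw [hmd']
        _ ≤ (m.primeFactors.card : ℚ) / m.totient :=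
            omega_div_totient_step p m hp hpodd h3m
        _ ≤ (d.primeFactors.card : ℚ) / d.totient := ih m hmlt hmodd hdm
end

section
/- Let d and d' be odd positive integers with d ≥ 3 and d dividing d'. Then ω(d)/φ(d) = ω(d')/φ(d') if and only if either d = d', or d is a prime power p^α with p ≥ 5 and d' = 3d. -/
private lemma aux_two_pow_le_totient_prod (T : Finset ℕ)
    (hT : ∀ q ∈ T, q.Prime ∧ 3 ≤ q) :
    2 ^ T.card ≤ Nat.totient (∏ q ∈ T, q) := by
  induction T using Finset.cons_induction with
  | empty => simp
  | cons a s ha ih =>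
    have hTa := hT a (Finset.mem_cons_self a s)
    have hs : ∀ q ∈ s, q.Prime ∧ 3 ≤ q := fun q hq => hT q (Finset.mem_cons_of_mem hq)
    have hcop : Nat.Coprime a (∏ q ∈ s, q) := by
      rw [Nat.Prime.coprime_iff_not_dvd hTa.1]
      intro hdvd
      obtain ⟨q, hq, hq2⟩ := (Prime.dvd_finset_prod_iff hTa.1.prime _).1 hdvd
      exact ha (((Nat.prime_dvd_prime_iff_eq hTa.1 (hs q hq).1).1 hq2) ▸ hq)
    rw [Finset.prod_cons, Nat.totient_mul hcop, Nat.totient_prime hTa.1,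
      Finset.card_cons, pow_succ, mul_comm (2 ^ s.card) 2]
    exact Nat.mul_le_mul (by omega) (ih hs)

private lemma aux_totient_mul_le (a b : ℕ) (ha : 0 < a) :
    Nat.totient a * Nat.totient b ≤ Nat.totient (a * b) := by
  have h := Nat.totient_gcd_mul_totient_mul a b
  have hg : 0 < Nat.gcd a b := Nat.gcd_pos_of_pos_left b ha
  have hφg : 0 < Nat.totient (Nat.gcd a b) := Nat.totient_pos.2 hg
  have hle : Nat.totient (Nat.gcd a b) ≤ Nat.gcd a b := Nat.totient_le _
  have key : Nat.totient a * Nat.totient b * Nat.totient (Nat.gcd a b)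
      ≤ Nat.totient (a * b) * Nat.totient (Nat.gcd a b) := by
    calc Nat.totient a * Nat.totient b * Nat.totient (Nat.gcd a b)
        ≤ Nat.totient a * Nat.totient b * Nat.gcd a b := Nat.mul_le_mul_left _ hle
      _ = Nat.totient (Nat.gcd a b) * Nat.totient (a * b) := h.symm
      _ = Nat.totient (a * b) * Nat.totient (Nat.gcd a b) := mul_comm _ _
  exact Nat.le_of_mul_le_mul_right key hφg

private lemma aux_lt_two_pow_pred (k : ℕ) (hk : 3 ≤ k) : k < 2 ^ (k - 1) := by
  induction k with
  | zero => omega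
  | succ n ih =>
    rcases Nat.lt_or_ge n 3 with h | h
    · interval_cases n <;> simp_all <;> omega
    · have := ih (by omega)
      have h2 : n + 1 - 1 = (n - 1) + 1 := by omega
      rw [h2, pow_succ]
      omega

theorem omega_div_totient_eq_iff (d d' : ℕ) (hd : Odd d) (hd' : Odd d')
    (h3 : 3 ≤ d) (hdvd : d ∣ d') :
    (d.primeFactors.card : ℚ) / d.totient = (d'.primeFactors.card : ℚ) / d'.totient ↔
      d = d' ∨ ∃ p α : ℕ, p.Prime ∧ 5 ≤ p ∧ 0 < α ∧ d = p ^ α ∧ d' = 3 * d := by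
  have hd0 : 0 < d := by omega
  have hd'0 : 0 < d' := hd'.pos
  have hφd : 0 < d.totient := Nat.totient_pos.2 hd0
  have hφd' : 0 < d'.totient := Nat.totient_pos.2 hd'0
  constructor
  · intro h
    by_cases heq : d = d'
    · exact Or.inl heq
    right
    -- cross-multiplied natural-number equation
    have hnat : d.primeFactors.card * d'.totient = d'.primeFactors.card * d.totient := by
      rw [div_eq_div_iff (by exact_mod_cast hφd.ne') (by exact_mod_cast hφd'.ne')] at h
      exact_mod_cast h
    obtain ⟨k, hk⟩ := Nat.totient_dvd_of_dvd hdvd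
    -- ω d' = ω d * k
    have hωd' : d'.primeFactors.card = d.primeFactors.card * k := by
      have h1 : (d.primeFactors.card * k) * d.totient = d'.primeFactors.card * d.totient := by
        rw [← hnat, hk]; ring
      exact (Nat.eq_of_mul_eq_mul_right hφd h1).symm
    -- m := d'/d, m ≥ 3
    obtain ⟨m, hm⟩ := hdvd
    have hdvd : d ∣ d' := ⟨m, hm⟩
    have hmodd : Odd m := (Nat.odd_mul.1 (hm ▸ hd')).2
    have hm1 : m ≠ 1 := fun h1 => heq (by rw [hm, h1, mul_one])
    have hm3 : 3 ≤ m := by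
      obtain ⟨r, hr⟩ := hmodd
      have : m ≠ 0 := by rintro rfl; rw [hm, mul_zero] at hd'0; omega
      omega
    have hφm2 : 2 ≤ m.totient := by
      obtain ⟨r, hr⟩ := Nat.totient_even (by omega : 2 < m)
      have : 0 < m.totient := Nat.totient_pos.2 (by omega)
      omega
    -- k ≥ 2
    have hk2 : 2 ≤ k := by
      have h1 : d.totient * m.totient ≤ d'.totient := by
        rw [hm]; exact aux_totient_mul_le d m hd0
      rw [hk] at h1
      have := Nat.le_of_mul_le_mul_left (le_trans (Nat.mul_le_mul_left d.totient hφm2) h1) hφd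
      omega
    -- the set of new primes
    set T := d'.primeFactors \ d.primeFactors with hT
    have hsub : d.primeFactors ⊆ d'.primeFactors := Nat.primeFactors_mono hdvd hd'0.ne'
    have hTcard : T.card = d.primeFactors.card * k - d.primeFactors.card := by
      rw [hT, Finset.card_sdiff_of_subset hsub, hωd']
    have hTprime : ∀ q ∈ T, q.Prime ∧ 3 ≤ q := by
      intro q hq
      have hq' : q ∈ d'.primeFactors := (Finset.mem_sdiff.1 hq).1
      have hqp := Nat.prime_of_mem_primeFactors hq'
      have hqdvd := Nat.dvd_of_mem_primeFactors hq'
      have hq2 : q ≠ 2 := by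
        rintro rfl
        exact (Nat.not_odd_iff_even.2 (even_iff_two_dvd.2 hqdvd)) hd'
      exact ⟨hqp, by have := hqp.two_le; omega⟩
    -- d * ∏ T ∣ d'
    have hcopT : Nat.Coprime d (∏ q ∈ T, q) := by
      apply Nat.Coprime.prod_right
      intro q hq
      have hqp := (hTprime q hq).1
      have hqnd : ¬ q ∣ d := fun hdq =>
        (Finset.mem_sdiff.1 hq).2 (Nat.mem_primeFactors.2 ⟨hqp, hdq, hd0.ne'⟩)
      exact ((Nat.Prime.coprime_iff_not_dvd hqp).2 hqnd).symm
    have hProdDvd : (∏ q ∈ T, q) ∣ d' :=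
      dvd_trans (Finset.prod_dvd_prod_of_subset _ _ _ Finset.sdiff_subset)
        (Nat.prod_primeFactors_dvd d')
    have hP : d * (∏ q ∈ T, q) ∣ d' := hcopT.mul_dvd_of_dvd_of_dvd hdvd hProdDvd
    -- bound 2 ^ |T| ≤ k
    have hbound : 2 ^ T.card ≤ k := by
      have h1 : d.totient * (2 ^ T.card) ≤ d.totient * k := by
        calc d.totient * 2 ^ T.card
            ≤ d.totient * Nat.totient (∏ q ∈ T, q) :=
              Nat.mul_le_mul_left _ (aux_two_pow_le_totient_prod T hTprime)
          _ = Nat.totient (d * ∏ q ∈ T, q) := (Nat.totient_mul hcopT).symm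
          _ ≤ d'.totient := Nat.le_of_dvd hφd' (Nat.totient_dvd_of_dvd hP)
          _ = d.totient * k := hk
      exact Nat.le_of_mul_le_mul_left h1 hφd
    have hω0 : 0 < d.primeFactors.card := by
      rw [Finset.card_pos, Nat.nonempty_primeFactors]; omega
    -- ω d = 1
    have hω1 : d.primeFactors.card = 1 := by
      by_contra hne
      have hω2 : 2 ≤ d.primeFactors.card := by omega
      have hTk : k ≤ T.card := by
        rw [hTcard]
        have h2k : 2 * (k - 1) ≤ d.primeFactors.card * (k - 1) :=
          Nat.mul_le_mul_right _ hω2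
        have hAB : d.primeFactors.card * (k - 1) + d.primeFactors.card
            = d.primeFactors.card * k := by
          have hk1 : k - 1 + 1 = k := by omega
          calc d.primeFactors.card * (k - 1) + d.primeFactors.card
              = d.primeFactors.card * ((k - 1) + 1) := by ring
            _ = d.primeFactors.card * k := by rw [hk1]
        omega
      have : k < 2 ^ k := Nat.lt_two_pow_self
      have h2 : 2 ^ k ≤ 2 ^ T.card := Nat.pow_le_pow_right (by norm_num) hTk
      omega
    -- k = 2
    have hTcard1 : T.card = k - 1 := by rw [hTcard, hω1]; omega
    have hkeq : k = 2 := by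
      by_contra hne
      have h3k : 3 ≤ k := by omega
      have := aux_lt_two_pow_pred k h3k
      rw [hTcard1] at hbound
      omega
    have hT1 : T.card = 1 := by omega
    obtain ⟨q, hq⟩ := Finset.card_eq_one.1 hT1
    have hqT : q ∈ T := hq ▸ Finset.mem_singleton_self q
    obtain ⟨hqp, hq3⟩ := hTprime q hqT
    have hqnd : q ∉ d.primeFactors := (Finset.mem_sdiff.1 hqT).2
    -- d = p ^ α
    obtain ⟨p, α, hpp, hα, hpα⟩ := isPrimePow_iff_card_primeFactors_eq_one.2 hω1
    have hpnat : p.Prime := Nat.prime_iff.2 hpp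
    have hdPF : d.primeFactors = {p} := by
      rw [← hpα, Nat.primeFactors_pow p hα.ne', hpnat.primeFactors]
    have hpq : p ≠ q := by
      rintro rfl; exact hqnd (hdPF ▸ Finset.mem_singleton_self p)
    have hPF' : d'.primeFactors = {p, q} := by
      have h5 : d.primeFactors ∪ T = d'.primeFactors := by
        rw [hT]; exact Finset.union_sdiff_of_subset hsub
      rw [← h5, hdPF, hq]
      ext x; simp
    set β := d'.factorization p with hβdef
    set γ := d'.factorization q with hγdef
    have hd'eq : d' = p ^ β * q ^ γ := by
      conv_lhs => rw [← Nat.factorization_prod_pow_eq_self hd'0.ne']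
      rw [Finsupp.prod, Nat.support_factorization, hPF', Finset.prod_pair hpq]
    have hβpos : 0 < β := by
      have : p ∈ d'.primeFactors := hPF' ▸ Finset.mem_insert_self p {q}
      have := Nat.mem_primeFactors.1 this
      exact Nat.Prime.factorization_pos_of_dvd hpnat hd'0.ne' this.2.1
    have hγpos : 0 < γ := by
      have : q ∈ d'.primeFactors := hPF' ▸ Finset.mem_insert_of_mem (Finset.mem_singleton_self q)
      have := Nat.mem_primeFactors.1 this
      exact Nat.Prime.factorization_pos_of_dvd hqp hd'0.ne' this.2.1
    have hαβ : α ≤ β := by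
      rw [hβdef]
      exact (Nat.Prime.pow_dvd_iff_le_factorization hpnat hd'0.ne').1 (hpα ▸ hdvd)
    -- totient equation
    have hcoppq : Nat.Coprime (p ^ β) (q ^ γ) :=
      ((Nat.coprime_primes hpnat hqp).2 hpq).pow β γ
    have hφd' : d'.totient = (p ^ (β - 1) * (p - 1)) * (q ^ (γ - 1) * (q - 1)) := by
      rw [hd'eq, Nat.totient_mul hcoppq, Nat.totient_prime_pow hpnat hβpos,
        Nat.totient_prime_pow hqp hγpos]
    have hφdeq : d.totient = p ^ (α - 1) * (p - 1) := by
      rw [← hpα] at *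
      exact Nat.totient_prime_pow hpnat hα
    have hkey : p ^ (β - 1) * (q ^ (γ - 1) * (q - 1)) = p ^ (α - 1) * 2 := by
      have e : (p ^ (β - 1) * (q ^ (γ - 1) * (q - 1))) * (p - 1)
          = (p ^ (α - 1) * 2) * (p - 1) := by
        have := hk
        rw [hφd', hφdeq, hkeq] at this
        linarith [this]
      exact Nat.eq_of_mul_eq_mul_right (by have := hpnat.two_le; omega) e
    -- γ = 1
    have hγ1 : γ = 1 := by
      by_contra hne
      have hγ2 : 2 ≤ γ := by omega
      have hqdLHS : q ∣ p ^ (β - 1) * (q ^ (γ - 1) * (q - 1)) := by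
        have : q ∣ q ^ (γ - 1) := dvd_pow_self q (by omega)
        exact Dvd.dvd.mul_left (this.mul_right _) _
      rw [hkey] at hqdLHS
      rcases (Nat.Prime.dvd_mul hqp).1 hqdLHS with h1 | h1
      · exact hpq ((Nat.prime_dvd_prime_iff_eq hqp hpnat).1 (hqp.dvd_of_dvd_pow h1)).symm
      · have := Nat.le_of_dvd (by norm_num) h1; omega
    rw [hγ1] at hkey
    simp only [Nat.sub_self, pow_zero, one_mul] at hkey
    -- q - 1 = 2r
    obtain ⟨r, hr⟩ := hqp.odd_of_ne_two (by omega)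
    have hqm1 : q - 1 = 2 * r := by omega
    have e2 : p ^ (β - 1) * r = p ^ (α - 1) := by
      have h2 : (p ^ (β - 1) * r) * 2 = p ^ (α - 1) * 2 := by
        rw [← hkey, hqm1]; ring
      omega
    have hβα : β - 1 ≤ α - 1 := (pow_dvd_pow_iff hpnat.pos.ne' (by
      simp [Nat.isUnit_iff]; exact hpnat.ne_one)).1 ⟨r, e2.symm⟩
    have hβeq : β = α := by omega
    have hrone : r = 1 := by
      rw [hβeq] at e2
      have hpos : 0 < p ^ (α - 1) := pow_pos hpnat.pos _
      exact Nat.eq_of_mul_eq_mul_left hpos (by rw [mul_one, e2])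
    have hq3val : q = 3 := by omega
    have hd'final : d' = 3 * d := by
      rw [hd'eq, hβeq, hγ1, hq3val, ← hpα]; ring
    have hpd : p ∣ d := hpα ▸ dvd_pow_self p hα.ne'
    have hp2 : p ≠ 2 := by
      rintro rfl
      exact (Nat.not_odd_iff_even.2 (even_iff_two_dvd.2 hpd)) hd
    have hp3' : p ≠ 3 := hq3val ▸ hpq
    have hp5 : 5 ≤ p := by
      have h2 := hpnat.two_le
      by_contra h5
      interval_cases p
      · exact hp2 rfl
      · exact hp3' rfl
      · exact absurd hpnat (by decide)
    exact ⟨p, α, hpnat, hp5, hα, hpα.symm, hd'final⟩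
  · rintro (rfl | ⟨p, α, hp, hp5, hα, rfl, rfl⟩)
    · rfl
    · have hp3 : p ≠ 3 := by omega
      have hp0 : (0:ℕ) < p ^ α := pow_pos hp.pos α
      have hcop : Nat.Coprime 3 (p ^ α) :=
        Nat.Coprime.pow_right _ ((Nat.coprime_primes (by norm_num) hp).2 (by omega))
      have h1 : (p ^ α).primeFactors = {p} := by
        rw [Nat.primeFactors_pow p hα.ne', hp.primeFactors]
      have h2 : (3 * p ^ α).primeFactors = {3, p} := by
        rw [Nat.primeFactors_mul (by norm_num) hp0.ne', h1,
          (Nat.prime_three).primeFactors]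
        rfl
      have h3 : (3 * p ^ α).totient = 2 * (p ^ α).totient := by
        rw [Nat.totient_mul hcop, Nat.totient_prime Nat.prime_three]
      have hcard : ({3, p} : Finset ℕ).card = 2 := by
        rw [Finset.card_insert_of_notMem (by simp [hp3.symm, (by omega : ¬ (3:ℕ) = p)]),
          Finset.card_singleton]
      have hφpos : (0:ℚ) < ((p ^ α).totient : ℚ) := by
        exact_mod_cast Nat.totient_pos.2 hp0
      rw [h1, h2, h3, hcard, Finset.card_singleton]
      push_cast
      field_simp
end

section
/- For every finite group G, the number of edges of the cyclic subgroup graph of G equals the sum over all elements a ∈ G of ω(o(a))/φ(o(a)), where o(a) is the order of a, ω counts distinct prime divisors, and φ is Euler's totient function. -/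
/-- The edge set of the cyclic subgroup graph of `G`: pairs `(H₁, H₂)` of cyclic
subgroups with `H₁ < H₂` and no cyclic subgroup strictly between them. -/
def cyclicGraphEdges (G : Type*) [Group G] : Set (Subgroup G × Subgroup G) :=
  {e | IsCyclic e.1 ∧ IsCyclic e.2 ∧ e.1 < e.2 ∧
    ∀ K : Subgroup G, IsCyclic K → e.1 < K → ¬ K < e.2}

/-- The number of edges of the cyclic subgroup graph of `G`. -/
noncomputable def numCyclicEdges (G : Type*) [Group G] : ℕ :=
  Nat.card (cyclicGraphEdges G)

open Subgroup Finset

section AuxCyclic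
variable {α : Type*} [Group α] [Fintype α] [IsCyclic α]

lemma myCoe_eq (K : Subgroup α) :
    (K : Set α) = {x : α | x ^ Nat.card K = 1} := by
  classical
  have hpos : 0 < Nat.card K := Nat.card_pos
  refine Set.eq_of_subset_of_ncard_le ?_ ?_ (Set.toFinite _)
  · intro x hx
    have h := pow_card_eq_one' (x := (⟨x, hx⟩ : K))
    have h2 : ((⟨x, hx⟩ : K) : α) ^ Nat.card K = 1 := by
      rw [← Subgroup.coe_pow, h, Subgroup.coe_one]
    exact h2
  · have h1 : {x : α | x ^ Nat.card K = 1}.ncard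
        = (Finset.univ.filter fun a : α => a ^ Nat.card K = 1).card := by
      rw [Set.ncard_eq_toFinset_card']
      congr 1
      ext x
      simp
    have h2 := IsCyclic.card_pow_eq_one_le (α := α) hpos
    rw [h1, ← Nat.card_coe_set_eq]
    calc (Finset.univ.filter fun a : α => a ^ Nat.card K = 1).card ≤ Nat.card K := h2
      _ = Nat.card (K : Set α) := by simp

lemma myLe_iff (H K : Subgroup α) : H ≤ K ↔ Nat.card H ∣ Nat.card K := by
  constructor
  · exact fun h => Subgroup.card_dvd_of_le h
  · intro h x hx
    have hxH : x ∈ (H : Set α) := hx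
    rw [myCoe_eq] at hxH
    have hx1 : x ^ Nat.card K = 1 := by
      obtain ⟨c, hc⟩ := h
      rw [hc, pow_mul, hxH, one_pow]
    have : x ∈ (K : Set α) := by rw [myCoe_eq]; exact hx1
    exact this

lemma myExists (d : ℕ) (hd : d ∣ Nat.card α) : ∃ K : Subgroup α, Nat.card K = d := by
  obtain ⟨g, hg⟩ := IsCyclic.exists_generator (α := α)
  have hord : orderOf g = Nat.card α := orderOf_eq_card_of_forall_mem_zpowers hg
  refine ⟨zpowers (g ^ (Nat.card α / d)), ?_⟩
  rw [Nat.card_zpowers, orderOf_pow, hord]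
  have hpos : 0 < Nat.card α := Nat.card_pos
  rcases Nat.eq_zero_or_pos d with rfl | hdpos
  · exact absurd (zero_dvd_iff.mp hd) hpos.ne'
  · rw [Nat.gcd_eq_right (Nat.div_dvd_of_dvd hd), Nat.div_div_self hd hpos.ne']

end AuxCyclic

section Transfer
variable {G : Type*} [Group G] [Fintype G]

lemma card_subgroupOf_eq {H K : Subgroup G} (h : H ≤ K) :
    Nat.card (H.subgroupOf K) = Nat.card H :=
  Nat.card_congr (Subgroup.subgroupOfEquivOfLe h).toEquiv

lemma le_iff_card_dvd {H₂ : Subgroup G} [IsCyclic H₂] {A B : Subgroup G}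
    (hA : A ≤ H₂) (hB : B ≤ H₂) : A ≤ B ↔ Nat.card A ∣ Nat.card B := by
  classical
  haveI : Fintype H₂ := Fintype.ofFinite _
  rw [← card_subgroupOf_eq hA, ← card_subgroupOf_eq hB, ← myLe_iff]
  constructor
  · intro h
    exact Subgroup.comap_mono h
  · intro h
    have := Subgroup.map_mono (f := H₂.subtype) h
    rw [Subgroup.subgroupOf_map_subtype, Subgroup.subgroupOf_map_subtype,
      inf_of_le_left hA, inf_of_le_left hB] at this
    exact this

lemma exists_le_card {H₂ : Subgroup G} [IsCyclic H₂] {d : ℕ} (hd : d ∣ Nat.card H₂) :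
    ∃ A : Subgroup G, A ≤ H₂ ∧ Nat.card A = d := by
  classical
  haveI : Fintype H₂ := Fintype.ofFinite _
  obtain ⟨K, hK⟩ := myExists (α := H₂) d hd
  refine ⟨K.map H₂.subtype, Subgroup.map_subtype_le K, ?_⟩
  rw [← hK]
  exact (Nat.card_congr (Subgroup.equivMapOfInjective K _ H₂.subtype_injective).toEquiv).symm

lemma edge_iff {H₁ H₂ : Subgroup G} (h₂ : IsCyclic H₂) :
    ((H₁, H₂) ∈ cyclicGraphEdges G) ↔
      H₁ ≤ H₂ ∧ ∃ p : ℕ, p.Prime ∧ Nat.card H₁ * p = Nat.card H₂ := by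
  haveI := h₂
  have c1pos : 0 < Nat.card H₁ := Nat.card_pos
  constructor
  · rintro ⟨hc1, -, hlt, hK⟩
    have hle := hlt.le
    obtain ⟨q, hq⟩ := Subgroup.card_dvd_of_le hle
    have hq1 : q ≠ 1 := by
      rintro rfl
      rw [mul_one] at hq
      exact hlt.ne (le_antisymm hle ((le_iff_card_dvd le_rfl hle).mpr (hq ▸ dvd_rfl)))
    set p := q.minFac with hpdef
    have hp : p.Prime := Nat.minFac_prime hq1
    have hdvd : Nat.card H₁ * p ∣ Nat.card H₂ := by
      rw [hq]; exact mul_dvd_mul_left _ (Nat.minFac_dvd q)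
    obtain ⟨K, hKle, hKcard⟩ := exists_le_card hdvd
    have hH₁K : H₁ < K := by
      refine lt_of_le_of_ne ((le_iff_card_dvd hle hKle).mpr ?_) ?_
      · rw [hKcard]; exact dvd_mul_right _ _
      · rintro rfl
        exact hp.one_lt.ne (Nat.eq_of_mul_eq_mul_left c1pos
          (by rw [mul_one]; exact hKcard))
    have hnotlt : ¬ K < H₂ := hK K (Subgroup.isCyclic_of_le hKle) hH₁K
    have hKeq : K = H₂ := hKle.lt_or_eq.resolve_left hnotlt
    exact ⟨hle, p, hp, by rw [← hKcard, hKeq]⟩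
  · rintro ⟨hle, p, hp, hcard⟩
    have hne : H₁ ≠ H₂ := by
      intro h
      rw [h] at hcard
      exact hp.one_lt.ne' (Nat.eq_of_mul_eq_mul_left (Nat.card_pos (α := H₂))
        (by rw [mul_one]; exact hcard))
    refine ⟨Subgroup.isCyclic_of_le hle, h₂, lt_of_le_of_ne hle hne, ?_⟩
    intro K _ hH₁K hKH₂
    have hKle : K ≤ H₂ := hKH₂.le
    obtain ⟨t, ht⟩ := (le_iff_card_dvd hle hKle).mp hH₁K.le
    have h2 : Nat.card K ∣ Nat.card H₁ * p := hcard ▸ Subgroup.card_dvd_of_le hKle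
    have htp : t ∣ p := by
      rw [ht] at h2
      exact (mul_dvd_mul_iff_left c1pos.ne').mp h2
    rcases (Nat.Prime.eq_one_or_self_of_dvd hp t htp) with rfl | rfl
    · rw [mul_one] at ht
      exact hH₁K.ne (le_antisymm hH₁K.le ((le_iff_card_dvd hKle hle).mpr (dvd_of_eq ht)))
    · rw [hcard] at ht
      exact hKH₂.ne (le_antisymm hKle ((le_iff_card_dvd le_rfl hKle).mpr (dvd_of_eq ht.symm)))

lemma count_edges [Fintype (Subgroup G)] [DecidableEq (Subgroup G)]
    {H₂ : Subgroup G} (h₂ : IsCyclic H₂)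
    [DecidablePred fun H₁ : Subgroup G => (H₁, H₂) ∈ cyclicGraphEdges G] :
    (Finset.univ.filter fun H₁ : Subgroup G => (H₁, H₂) ∈ cyclicGraphEdges G).card
      = (Nat.card H₂).primeFactors.card := by
  haveI := h₂
  have c2pos : 0 < Nat.card H₂ := Nat.card_pos
  refine Finset.card_bij (fun H₁ _ => Nat.card H₂ / Nat.card H₁) ?_ ?_ ?_
  · intro H₁ hH₁
    obtain ⟨hle, p, hp, hc⟩ := (edge_iff h₂).mp (Finset.mem_filter.mp hH₁).2
    have hdiv : Nat.card H₂ / Nat.card H₁ = p := by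
      rw [← hc, Nat.mul_div_cancel_left _ Nat.card_pos]
    show Nat.card H₂ / Nat.card H₁ ∈ (Nat.card H₂).primeFactors
    rw [hdiv]
    exact Nat.mem_primeFactors.mpr ⟨hp, ⟨Nat.card H₁, by rw [← hc, mul_comm]⟩, c2pos.ne'⟩
  · intro H₁ hH₁ H₁' hH₁' heq
    obtain ⟨hle, p, hp, hc⟩ := (edge_iff h₂).mp (Finset.mem_filter.mp hH₁).2
    obtain ⟨hle', p', hp', hc'⟩ := (edge_iff h₂).mp (Finset.mem_filter.mp hH₁').2
    have h1 : Nat.card H₁ = Nat.card H₂ / (Nat.card H₂ / Nat.card H₁) := by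
      rw [Nat.div_div_self ⟨p, hc.symm⟩ c2pos.ne']
    have h1' : Nat.card H₁' = Nat.card H₂ / (Nat.card H₂ / Nat.card H₁') := by
      rw [Nat.div_div_self ⟨p', hc'.symm⟩ c2pos.ne']
    have heq' : Nat.card H₂ / Nat.card H₁ = Nat.card H₂ / Nat.card H₁' := heq
    have hcc : Nat.card H₁ = Nat.card H₁' := by rw [h1, h1', heq']
    exact le_antisymm ((le_iff_card_dvd hle hle').mpr (hcc ▸ dvd_rfl))
      ((le_iff_card_dvd hle' hle).mpr (hcc ▸ dvd_rfl))
  · intro p hp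
    obtain ⟨hpp, hpdvd, -⟩ := Nat.mem_primeFactors.mp hp
    obtain ⟨A, hAle, hAcard⟩ := exists_le_card (Nat.div_dvd_of_dvd hpdvd)
    have hApos : Nat.card H₂ / p ≠ 0 := (Nat.div_pos (Nat.le_of_dvd c2pos hpdvd)
      hpp.pos).ne'
    refine ⟨A, Finset.mem_filter.mpr ⟨Finset.mem_univ _, (edge_iff h₂).mpr
      ⟨hAle, p, hpp, ?_⟩⟩, ?_⟩
    · rw [hAcard, Nat.div_mul_cancel hpdvd]
    · show Nat.card H₂ / Nat.card A = p
      rw [hAcard, Nat.div_div_self hpdvd c2pos.ne']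

lemma isCyclic_zpowers (a : G) : IsCyclic (zpowers a) := by
  refine ⟨⟨⟨a, mem_zpowers a⟩, fun x => ?_⟩⟩
  obtain ⟨k, hk⟩ := x.2
  exact ⟨k, Subtype.ext (by simpa using hk)⟩

lemma subgroup_eq_of_le_of_card_le {H K : Subgroup G} (h : H ≤ K)
    (hc : Nat.card K ≤ Nat.card H) : H = K := by
  apply SetLike.coe_injective
  refine Set.eq_of_subset_of_ncard_le h ?_ (Set.toFinite _)
  rw [← Nat.card_coe_set_eq, ← Nat.card_coe_set_eq]
  simpa using hc

lemma gen_count [Fintype (Subgroup G)] [DecidableEq (Subgroup G)]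
    {H : Subgroup G} (h : IsCyclic H) :
    (Finset.univ.filter fun a : G => zpowers a = H).card = (Nat.card H).totient := by
  classical
  haveI := h
  haveI : Fintype H := Fintype.ofFinite _
  have hcard : Nat.card H = Fintype.card H := Nat.card_eq_fintype_card
  rw [hcard, ← IsCyclic.card_orderOf_eq_totient (α := H) dvd_rfl]
  apply Finset.card_bij (fun a ha => (⟨a, by
    have := (Finset.mem_filter.mp ha).2
    rw [← this]; exact mem_zpowers a⟩ : H))
  · intro a ha
    have h2 := (Finset.mem_filter.mp ha).2
    simp only [Finset.mem_filter, Finset.mem_univ, true_and]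
    have ho : orderOf a = Fintype.card H := by
      rw [← hcard, ← h2, Nat.card_zpowers]
    exact (orderOf_submonoid _).symm.trans ho
  · intro a ha b hb heq
    exact congrArg Subtype.val heq
  · intro x hx
    have h2 := (Finset.mem_filter.mp hx).2
    refine ⟨(x : G), Finset.mem_filter.mpr ⟨Finset.mem_univ _, ?_⟩, rfl⟩
    apply subgroup_eq_of_le_of_card_le
    · rw [zpowers_le]; exact x.2
    · rw [Nat.card_zpowers, orderOf_submonoid, h2, hcard]

end Transfer

theorem numCyclicEdges_eq_sum (G : Type*) [Group G] [Fintype G] :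
    (numCyclicEdges G : ℚ) =
      ∑ a : G, ((orderOf a).primeFactors.card : ℚ) / (orderOf a).totient := by
  classical
  haveI : Fintype (Subgroup G) := Fintype.ofFinite _
  -- LHS as a sum over subgroups
  have hL : numCyclicEdges G = ∑ H₂ : Subgroup G,
      (Finset.univ.filter fun H₁ : Subgroup G => (H₁, H₂) ∈ cyclicGraphEdges G).card := by
    rw [numCyclicEdges, Nat.card_coe_set_eq,
      Set.ncard_eq_toFinset_card' (cyclicGraphEdges G)]
    have : (cyclicGraphEdges G).toFinset
        = Finset.univ.filter (fun e => e ∈ cyclicGraphEdges G) := by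
      ext e; simp
    rw [this, Finset.card_filter]
    rw [Fintype.sum_prod_type_right]
    congr 1
    funext H₂
    rw [Finset.card_filter]
  have hL2 : numCyclicEdges G = ∑ H₂ : Subgroup G,
      (if IsCyclic H₂ then ((Nat.card H₂).primeFactors.card) else 0) := by
    rw [hL]
    apply Finset.sum_congr rfl
    intro H₂ _
    by_cases h₂ : IsCyclic H₂
    · rw [if_pos h₂, count_edges h₂]
    · rw [if_neg h₂]
      rw [Finset.card_eq_zero, Finset.filter_eq_empty_iff]
      intro H₁ _ he
      exact h₂ he.2.1
  -- RHS as a sum over subgroups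
  have hR : ∑ a : G, ((orderOf a).primeFactors.card : ℚ) / (orderOf a).totient
      = ∑ H₂ : Subgroup G,
        (if IsCyclic H₂ then ((Nat.card H₂).primeFactors.card : ℚ) else 0) := by
    have key : ∀ a : G, ((orderOf a).primeFactors.card : ℚ) / (orderOf a).totient
        = (((Nat.card (zpowers a)).primeFactors.card : ℚ)
            / (Nat.card (zpowers a)).totient) := by
      intro a; rw [Nat.card_zpowers]
    rw [Finset.sum_congr rfl fun a _ => key a]
    rw [← Finset.sum_fiberwise_of_maps_to (g := fun a : G => zpowers a)
      (t := Finset.univ) (fun _ _ => Finset.mem_univ _)]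
    apply Finset.sum_congr rfl
    intro H₂ _
    by_cases h₂ : IsCyclic H₂
    · rw [if_pos h₂]
      have : ∀ a ∈ Finset.univ.filter fun a : G => zpowers a = H₂,
          (((Nat.card (zpowers a)).primeFactors.card : ℚ)
            / (Nat.card (zpowers a)).totient)
          = (((Nat.card H₂).primeFactors.card : ℚ) / (Nat.card H₂).totient) := by
        intro a ha
        rw [(Finset.mem_filter.mp ha).2]
      rw [Finset.sum_congr rfl this, Finset.sum_const, gen_count h₂, nsmul_eq_mul]
      have htpos : 0 < (Nat.card H₂).totient := Nat.totient_pos.mpr Nat.card_pos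
      field_simp
    · rw [if_neg h₂]
      apply Finset.sum_eq_zero
      intro a ha
      exact absurd ((Finset.mem_filter.mp ha).2 ▸ _root_.isCyclic_zpowers a) h₂
  rw [hR, hL2]
  push_cast [apply_ite (Nat.cast : ℕ → ℚ)]
  rfl
end

section
/- For a finite p-group G, the number of edges of the cyclic subgroup graph of G equals |C(G)| − 1, where C(G) is the set of cyclic subgroups of G. -/
/-- In a finite cyclic group, a subgroup whose order divides that of another subgroup
is contained in it. -/
lemma aux_le_of_card_dvd {Γ : Type*} [Group Γ] [Finite Γ] [IsCyclic Γ] (H K : Subgroup Γ)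
    (h : Nat.card H ∣ Nat.card K) : H ≤ K := by
  classical
  cases nonempty_fintype Γ
  set m := Nat.card K with hm
  have hm0 : 0 < m := Nat.card_pos
  -- the set of m-th roots of 1 has at most m elements
  have hcard := IsCyclic.card_pow_eq_one_le (α := Γ) hm0
  -- K is contained in that set
  have hKsub : (K : Set Γ).toFinset ⊆ ({a : Γ | a ^ m = 1} : Finset Γ) := by
    intro x hx
    rw [Set.mem_toFinset] at hx
    have : (⟨x, hx⟩ : K) ^ m = 1 := pow_card_eq_one'
    have : ((⟨x, hx⟩ : K) : Γ) ^ m = 1 := by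
      rw [← SubmonoidClass.coe_pow, this]; rfl
    simpa using this
  have hKcard : ((K : Set Γ).toFinset).card = m := by
    rw [Set.toFinset_card, hm, Nat.card_eq_fintype_card]
    exact Fintype.card_congr (Equiv.refl _)
  have heq : (K : Set Γ).toFinset = ({a : Γ | a ^ m = 1} : Finset Γ) :=
    Finset.eq_of_subset_of_card_le hKsub (by rw [hKcard]; exact hcard)
  intro x hx
  obtain ⟨c, hc⟩ := h
  have hxH : (⟨x, hx⟩ : H) ^ Nat.card H = 1 := pow_card_eq_one'
  have hx1 : x ^ Nat.card H = 1 := by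
    have : ((⟨x, hx⟩ : H) : Γ) ^ Nat.card H = 1 := by
      rw [← SubmonoidClass.coe_pow, hxH]; rfl
    simpa using this
  have hxm : x ^ m = 1 := by
    rw [hc, pow_mul, hx1, one_pow]
  have : x ∈ (K : Set Γ).toFinset := by
    rw [heq]; simpa using hxm
  rwa [Set.mem_toFinset] at this

/-- Subgroups contained in a cyclic subgroup of a finite p-group are comparable. -/
lemma aux_comparable {G : Type*} [Group G] [Finite G] {p : ℕ} (hp : p.Prime)
    (hG : IsPGroup p G) {K H H' : Subgroup G} (hK : IsCyclic K)
    (h1 : H ≤ K) (h2 : H' ≤ K) : H ≤ H' ∨ H' ≤ H := by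
  haveI : Fact p.Prime := ⟨hp⟩
  haveI : IsCyclic K := hK
  obtain ⟨a, ha⟩ := (IsPGroup.iff_card).mp (hG.to_subgroup H)
  obtain ⟨b, hb⟩ := (IsPGroup.iff_card).mp (hG.to_subgroup H')
  have hcard1 : Nat.card (H.subgroupOf K) = Nat.card H :=
    Nat.card_congr (Subgroup.subgroupOfEquivOfLe h1).toEquiv
  have hcard2 : Nat.card (H'.subgroupOf K) = Nat.card H' :=
    Nat.card_congr (Subgroup.subgroupOfEquivOfLe h2).toEquiv
  have key : ∀ {A B : Subgroup G}, A ≤ K → B ≤ K →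
      Nat.card A ∣ Nat.card B → A ≤ B := by
    intro A B hA hB hdvd
    have hc1 : Nat.card (A.subgroupOf K) = Nat.card A :=
      Nat.card_congr (Subgroup.subgroupOfEquivOfLe hA).toEquiv
    have hc2 : Nat.card (B.subgroupOf K) = Nat.card B :=
      Nat.card_congr (Subgroup.subgroupOfEquivOfLe hB).toEquiv
    have hle : A.subgroupOf K ≤ B.subgroupOf K :=
      aux_le_of_card_dvd _ _ (by rw [hc1, hc2]; exact hdvd)
    have := Subgroup.map_mono (f := K.subtype) hle
    rwa [Subgroup.subgroupOf_map_subtype, Subgroup.subgroupOf_map_subtype,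
      inf_eq_left.mpr hA, inf_eq_left.mpr hB] at this
  rcases le_total a b with hab | hab
  · exact Or.inl (key h1 h2 (by rw [ha, hb]; exact pow_dvd_pow p hab))
  · exact Or.inr (key h2 h1 (by rw [ha, hb]; exact pow_dvd_pow p hab))

theorem numCyclicEdges_pGroup (G : Type*) [Group G] [Finite G] (p : ℕ)
    (hp : p.Prime) (hG : IsPGroup p G) :
    numCyclicEdges G = Nat.card {H : Subgroup G | IsCyclic H} - 1 := by
  classical
  -- bijection from edges to nontrivial cyclic subgroups, sending an edge to its top
  set B : Set (Subgroup G) := {K | IsCyclic K ∧ K ≠ ⊥} with hB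
  have hinj : ∀ e₁ e₂ : cyclicGraphEdges G, (e₁ : Subgroup G × Subgroup G).2 =
      (e₂ : Subgroup G × Subgroup G).2 → e₁ = e₂ := by
    rintro ⟨⟨H₁, K₁⟩, hc1, hc1', hlt1, hmax1⟩ ⟨⟨H₂, K₂⟩, hc2, hc2', hlt2, hmax2⟩ h
    simp only at h
    subst h
    have hcomp := aux_comparable hp hG hc1' hlt1.le hlt2.le
    have heq : H₁ = H₂ := by
      rcases hcomp with hle | hle
      · rcases lt_or_eq_of_le hle with hlt | heq
        · exact absurd hlt2 (hmax1 H₂ hc2 hlt)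
        · exact heq
      · rcases lt_or_eq_of_le hle with hlt | heq
        · exact absurd hlt1 (hmax2 H₁ hc1 hlt)
        · exact heq.symm
    simp [heq]
  have hsurj : ∀ K ∈ B, ∃ e : cyclicGraphEdges G, (e : Subgroup G × Subgroup G).2 = K := by
    rintro K ⟨hKc, hKne⟩
    have hne : ({L : Subgroup G | IsCyclic L ∧ L < K}).Nonempty :=
      ⟨⊥, isCyclic_of_subsingleton, bot_lt_iff_ne_bot.mpr hKne⟩
    obtain ⟨H, ⟨hHc, hHlt⟩, hHmax⟩ :=
      Set.Finite.exists_maximalFor id _ (Set.toFinite _) hne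
    refine ⟨⟨(H, K), hHc, hKc, hHlt, ?_⟩, rfl⟩
    intro L hLc hHL hLK
    exact absurd (hHmax ⟨hLc, hLK⟩ hHL.le) hHL.not_ge
  have hmem : ∀ e : cyclicGraphEdges G, (e : Subgroup G × Subgroup G).2 ∈ B := by
    rintro ⟨⟨H, K⟩, hc, hc', hlt, hmax⟩
    exact ⟨hc', by rintro rfl; exact not_lt_bot hlt⟩
  have hequiv : Nat.card (cyclicGraphEdges G) = Nat.card B := by
    apply Nat.card_eq_of_bijective (fun e => ⟨(e : Subgroup G × Subgroup G).2, hmem e⟩)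
    constructor
    · intro e₁ e₂ h
      exact hinj e₁ e₂ (congrArg Subtype.val h)
    · rintro ⟨K, hK⟩
      obtain ⟨e, he⟩ := hsurj K hK
      exact ⟨e, Subtype.ext he⟩
  have hA : {H : Subgroup G | IsCyclic H} = insert (⊥ : Subgroup G) B := by
    ext K
    simp only [Set.mem_setOf_eq, Set.mem_insert_iff, hB]
    constructor
    · intro hc
      by_cases h : K = ⊥
      · exact Or.inl h
      · exact Or.inr ⟨hc, h⟩
    · rintro (rfl | ⟨hc, _⟩)
      · exact isCyclic_of_subsingleton
      · exact hc
  have hcardA : Nat.card {H : Subgroup G | IsCyclic H} = Nat.card B + 1 := by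
    rw [Nat.card_coe_set_eq, Nat.card_coe_set_eq, hA,
      Set.ncard_insert_of_notMem (by simp [hB]) (Set.toFinite _)]
  rw [numCyclicEdges, hequiv, hcardA]
  simp
end

section
/- If G_1, ..., G_k are finite groups of pairwise coprime orders and G = G_1 × ⋯ × G_k, then |E(C(G)*)| = (∑_{i=1}^k |E(C(G_i)*)|/|C(G_i)|) · ∏_{i=1}^k |C(G_i)|, where C(G)* denotes the cyclic subgroup graph. -/
set_option maxHeartbeats 1000000


section aux
variable {G : Type*} [Group G]

lemma myIsCyclic_zpowers (g : G) : IsCyclic (Subgroup.zpowers g) := by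
  refine ⟨⟨⟨g, Subgroup.mem_zpowers g⟩, ?_⟩⟩
  rintro ⟨x, n, rfl⟩
  exact ⟨n, by ext; simp⟩

lemma mySubgroup_isCyclic_iff (H : Subgroup G) :
    IsCyclic H ↔ ∃ g : G, H = Subgroup.zpowers g := by
  constructor
  · rintro ⟨⟨⟨g, hg⟩, hgen⟩⟩
    refine ⟨g, le_antisymm ?_ ?_⟩
    · intro x hx
      obtain ⟨n, hn⟩ := hgen ⟨x, hx⟩
      exact ⟨n, congrArg Subtype.val hn⟩
    · exact (Subgroup.zpowers_le).2 hg
  · rintro ⟨g, rfl⟩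
    exact myIsCyclic_zpowers g

end aux

section pi
variable {ι : Type*} [Fintype ι] {G : ι → Type*} [∀ i, Group (G i)] [∀ i, Finite (G i)]

set_option linter.unusedSectionVars false

lemma myMap_eval_pi (K : ∀ i, Subgroup (G i)) (k : ι) :
    (Subgroup.pi Set.univ K).map (Pi.evalMonoidHom G k) = K k := by
  classical
  apply le_antisymm
  · rintro x ⟨y, hy, rfl⟩
    exact hy k (Set.mem_univ k)
  · intro x hx
    refine ⟨Pi.mulSingle k x, ?_, by simp [Pi.evalMonoidHom]⟩
    intro j _
    by_cases h : j = k
    · subst h; simpa using hx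
    · simp [Pi.mulSingle_apply, h, one_mem]

variable (hcop : Pairwise fun i j => Nat.Coprime (Nat.card (G i)) (Nat.card (G j)))
include hcop

lemma myMulSingle_mem [DecidableEq ι] (H : Subgroup (∀ i, G i)) {x : ∀ i, G i}
    (hx : x ∈ H) (i : ι) : Pi.mulSingle i (x i) ∈ H := by
  set m : ℕ := ∏ j ∈ Finset.univ.erase i, Nat.card (G j) with hm
  have hcd : Nat.Coprime m (orderOf (x i)) := by
    have h1 : Nat.Coprime m (Nat.card (G i)) := by
      apply Nat.Coprime.prod_left
      intro j hj
      exact hcop (Finset.ne_of_mem_erase hj)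
    exact h1.coprime_dvd_right (orderOf_dvd_natCard (x i))
  have hord : 0 < orderOf (x i) := by
    have : Finite (G i) := inferInstance
    exact orderOf_pos (x i)
  set n := orderOf (x i)
  have hφ : 0 < Nat.totient n := Nat.totient_pos.2 hord
  set k : ℕ := m ^ (Nat.totient n - 1) with hk
  have hmk : m * k ≡ 1 [MOD n] := by
    have := Nat.ModEq.pow_totient hcd
    have hmm : m * k = m ^ Nat.totient n := by
      rw [hk, ← pow_succ']
      congr 1
      omega
    rwa [hmm]
  have key : Pi.mulSingle i (x i) = x ^ (m * k) := by
    funext j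
    rw [Pi.pow_apply]
    by_cases h : j = i
    · subst h
      rw [Pi.mulSingle_eq_same]
      have := (pow_eq_pow_iff_modEq (x := x j)).2 hmk.symm
      simpa using this
    · rw [Pi.mulSingle_eq_of_ne h]
      have hdvd : orderOf (x j) ∣ m * k := by
        refine Dvd.dvd.mul_right ?_ k
        calc orderOf (x j) ∣ Nat.card (G j) := orderOf_dvd_natCard (x j)
        _ ∣ m := Finset.dvd_prod_of_mem _ (by simp [h])
      exact (orderOf_dvd_iff_pow_eq_one.1 hdvd).symm ▸ (orderOf_dvd_iff_pow_eq_one.1 hdvd)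
  rw [key]
  exact pow_mem hx _

lemma myEq_pi (H : Subgroup (∀ i, G i)) :
    H = Subgroup.pi Set.univ (fun i => H.map (Pi.evalMonoidHom G i)) := by
  classical
  apply le_antisymm
  · intro x hx j _
    exact ⟨x, hx, rfl⟩
  · intro y hy
    have hrep := Finset.noncommProd_mulSingle y
    rw [← hrep]
    apply Subgroup.noncommProd_mem
    intro i _
    obtain ⟨x, hxH, hxi⟩ := hy i (Set.mem_univ i)
    have : Pi.mulSingle i (x i) ∈ H := myMulSingle_mem hcop H hxH i
    rwa [show (x i : G i) = y i from hxi] at this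

lemma myLe_iff_s9 (A B : Subgroup (∀ i, G i)) :
    A ≤ B ↔ ∀ i, A.map (Pi.evalMonoidHom G i) ≤ B.map (Pi.evalMonoidHom G i) := by
  constructor
  · intro h i
    exact Subgroup.map_mono h
  · intro h
    rw [myEq_pi hcop A, myEq_pi hcop B]
    exact fun x hx j hj => h j (hx j hj)

lemma myLt_iff (A B : Subgroup (∀ i, G i)) :
    A < B ↔ (∀ i, A.map (Pi.evalMonoidHom G i) ≤ B.map (Pi.evalMonoidHom G i)) ∧
      ∃ i, A.map (Pi.evalMonoidHom G i) ≠ B.map (Pi.evalMonoidHom G i) := by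
  rw [lt_iff_le_and_ne, myLe_iff_s9 hcop]
  apply and_congr_right
  intro hle
  constructor
  · intro hne
    by_contra h
    push_neg at h
    apply hne
    rw [myEq_pi hcop A, myEq_pi hcop B]
    congr 1
    funext i
    exact h i
  · rintro ⟨i, hi⟩ rfl
    exact hi rfl

lemma myIsCyclic_iff (H : Subgroup (∀ i, G i)) :
    IsCyclic H ↔ ∀ i, IsCyclic (H.map (Pi.evalMonoidHom G i)) := by
  constructor
  · intro hH i
    obtain ⟨g, rfl⟩ := (mySubgroup_isCyclic_iff H).1 hH
    rw [MonoidHom.map_zpowers]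
    exact myIsCyclic_zpowers _
  · intro h
    choose g hg using fun i => (mySubgroup_isCyclic_iff _).1 (h i)
    have : H = Subgroup.zpowers (fun i => g i) := by
      rw [myEq_pi hcop H, myEq_pi hcop (Subgroup.zpowers fun i => g i)]
      congr 1
      funext i
      rw [hg i, MonoidHom.map_zpowers]
      rfl
    rw [this]
    exact myIsCyclic_zpowers _

lemma myEdge_iff (A B : Subgroup (∀ i, G i)) :
    (A, B) ∈ cyclicGraphEdges (∀ i, G i) ↔
      ∃ i, (A.map (Pi.evalMonoidHom G i), B.map (Pi.evalMonoidHom G i)) ∈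
            cyclicGraphEdges (G i) ∧
        ∀ j ≠ i, A.map (Pi.evalMonoidHom G j) = B.map (Pi.evalMonoidHom G j) ∧
          IsCyclic (A.map (Pi.evalMonoidHom G j)) := by
  classical
  constructor
  · rintro ⟨hAc, hBc, hlt, hcov⟩
    have cA := (myIsCyclic_iff (G := G) hcop A).1 hAc
    have cB := (myIsCyclic_iff (G := G) hcop B).1 hBc
    obtain ⟨hle, i, hnei⟩ := (myLt_iff (G := G) hcop A B).1 hlt
    have hlti : A.map (Pi.evalMonoidHom G i) < B.map (Pi.evalMonoidHom G i) :=
      lt_of_le_of_ne (hle i) hnei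
    have heq : ∀ j, j ≠ i → A.map (Pi.evalMonoidHom G j) = B.map (Pi.evalMonoidHom G j) := by
      intro j hj
      by_contra hne
      set T : ∀ k, Subgroup (G k) :=
        Function.update (fun k => A.map (Pi.evalMonoidHom G k)) i (B.map (Pi.evalMonoidHom G i))
        with hT
      set K := Subgroup.pi Set.univ T with hK
      have hKk : ∀ k, K.map (Pi.evalMonoidHom G k) = T k := fun k => myMap_eval_pi T k
      have hKc : IsCyclic K := by
        rw [myIsCyclic_iff (G := G) hcop K]
        intro k
        rw [hKk k, hT]
        by_cases h : k = i
        · subst h; rw [Function.update_self]; exact cB _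
        · rw [Function.update_of_ne h]; exact cA k
      have hAK : A < K := by
        rw [myLt_iff (G := G) hcop]
        constructor
        · intro k
          rw [hKk k, hT]
          by_cases h : k = i
          · subst h; rw [Function.update_self]; exact hle _
          · rw [Function.update_of_ne h]
        · refine ⟨i, ?_⟩
          rw [hKk i, hT, Function.update_self]
          exact hnei
      have hKB : K < B := by
        rw [myLt_iff (G := G) hcop]
        constructor
        · intro k
          rw [hKk k, hT]
          by_cases h : k = i
          · subst h; rw [Function.update_self]
          · rw [Function.update_of_ne h]; exact hle k
        · refine ⟨j, ?_⟩
          rw [hKk j, hT, Function.update_of_ne hj]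
          exact hne
      exact hcov K hKc hAK hKB
    refine ⟨i, ⟨cA i, cB i, hlti, ?_⟩, fun j hj => ⟨heq j hj, cA j⟩⟩
    intro L hLc hAL hLB
    set T : ∀ k, Subgroup (G k) :=
      Function.update (fun k => A.map (Pi.evalMonoidHom G k)) i L with hT
    set K := Subgroup.pi Set.univ T with hK
    have hKk : ∀ k, K.map (Pi.evalMonoidHom G k) = T k := fun k => myMap_eval_pi T k
    have hKc : IsCyclic K := by
      rw [myIsCyclic_iff (G := G) hcop K]
      intro k
      rw [hKk k, hT]
      by_cases h : k = i
      · subst h; rw [Function.update_self]; exact hLc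
      · rw [Function.update_of_ne h]; exact cA k
    have hAK : A < K := by
      rw [myLt_iff (G := G) hcop]
      constructor
      · intro k
        rw [hKk k, hT]
        by_cases h : k = i
        · subst h; rw [Function.update_self]; exact hAL.le
        · rw [Function.update_of_ne h]
      · refine ⟨i, ?_⟩
        rw [hKk i, hT, Function.update_self]
        exact hAL.ne
    have hKB : K < B := by
      rw [myLt_iff (G := G) hcop]
      constructor
      · intro k
        rw [hKk k, hT]
        by_cases h : k = i
        · subst h; rw [Function.update_self]; exact hLB.le
        · rw [Function.update_of_ne h]; exact hle k
      · refine ⟨i, ?_⟩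
        rw [hKk i, hT, Function.update_self]
        exact hLB.ne
    exact hcov K hKc hAK hKB
  · rintro ⟨i, ⟨hAci, hBci, hlti, hcovi⟩, hrest⟩
    have cA : ∀ j, IsCyclic (A.map (Pi.evalMonoidHom G j)) := by
      intro j
      by_cases h : j = i
      · subst h; exact hAci
      · exact (hrest j h).2
    have cB : ∀ j, IsCyclic (B.map (Pi.evalMonoidHom G j)) := by
      intro j
      by_cases h : j = i
      · subst h; exact hBci
      · rw [← (hrest j h).1]; exact (hrest j h).2
    refine ⟨(myIsCyclic_iff (G := G) hcop A).2 cA, (myIsCyclic_iff (G := G) hcop B).2 cB,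
      ?_, ?_⟩
    · rw [myLt_iff (G := G) hcop]
      refine ⟨fun j => ?_, ⟨i, hlti.ne⟩⟩
      by_cases h : j = i
      · subst h; exact hlti.le
      · exact ((hrest j h).1).le
    · intro K hKc hAK hKB
      have cK := (myIsCyclic_iff (G := G) hcop K).1 hKc
      obtain ⟨hleAK, kA, hneA⟩ := (myLt_iff (G := G) hcop A K).1 hAK
      obtain ⟨hleKB, kB, hneB⟩ := (myLt_iff (G := G) hcop K B).1 hKB
      have heqj : ∀ j, j ≠ i → K.map (Pi.evalMonoidHom G j) = A.map (Pi.evalMonoidHom G j) := by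
        intro j hj
        refine le_antisymm ?_ (hleAK j)
        rw [(hrest j hj).1]
        exact hleKB j
      have hkAi : kA = i := by
        by_contra h
        exact hneA (heqj kA h).symm
      have hkBi : kB = i := by
        by_contra h
        exact hneB ((heqj kB h).trans (hrest kB h).1)
      rw [hkAi] at hneA
      rw [hkBi] at hneB
      exact hcovi (K.map (Pi.evalMonoidHom G i)) (cK i)
        (lt_of_le_of_ne (hleAK i) hneA) (lt_of_le_of_ne (hleKB i) hneB)


lemma myCard_edges [DecidableEq ι] :
    Nat.card (cyclicGraphEdges (∀ i, G i)) =
      ∑ i, Nat.card (cyclicGraphEdges (G i)) *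
        ∏ j ∈ Finset.univ.erase i, Nat.card {H : Subgroup (G j) | IsCyclic H} := by
  classical
  -- the sigma type
  set S := (Σ i : ι, (cyclicGraphEdges (G i)) ×
      (∀ j : {j : ι // j ≠ i}, {H : Subgroup (G (j : ι)) | IsCyclic H})) with hS
  -- construction of a pair of subgroups of the product from split data
  have splitsame : ∀ (i : ι) (b : Subgroup (G i)) (c : ∀ j : {j : ι // j ≠ i}, Subgroup (G (j : ι))),
      (Equiv.piSplitAt i (fun k => Subgroup (G k))).symm (b, c) i = b := by
    intro i b c
    simp
  have splitne : ∀ (i : ι) (b : Subgroup (G i)) (c : ∀ j : {j : ι // j ≠ i}, Subgroup (G (j : ι)))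
      (j : ι) (h : j ≠ i),
      (Equiv.piSplitAt i (fun k => Subgroup (G k))).symm (b, c) j = c ⟨j, h⟩ := by
    intro i b c j h
    simp [Equiv.piSplitAt_symm_apply, h]
  set mk : ∀ (i : ι), Subgroup (G i) →
      (∀ j : {j : ι // j ≠ i}, Subgroup (G (j : ι))) → Subgroup (∀ k, G k) :=
    fun i b c => Subgroup.pi Set.univ ((Equiv.piSplitAt i (fun k => Subgroup (G k))).symm (b, c))
    with hmk
  have mk_map : ∀ (i : ι) b c (k : ι),
      (mk i b c).map (Pi.evalMonoidHom G k) =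
        (Equiv.piSplitAt i (fun k => Subgroup (G k))).symm (b, c) k := by
    intro i b c k
    rw [hmk]
    exact myMap_eval_pi _ k
  -- the bijection
  have hΦ : ∀ x : S, ((mk x.1 x.2.1.1.1 (fun j => (x.2.2 j).1),
      mk x.1 x.2.1.1.2 (fun j => (x.2.2 j).1)) ∈ cyclicGraphEdges (∀ i, G i)) := by
    rintro ⟨i, a, c⟩
    rw [myEdge_iff hcop]
    refine ⟨i, ?_, ?_⟩
    · rw [mk_map, mk_map, splitsame, splitsame]
      exact a.2
    · intro j hj
      rw [mk_map, mk_map, splitne i _ _ j hj, splitne i _ _ j hj]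
      exact ⟨rfl, (c ⟨j, hj⟩).2⟩
  set Φ : S → (cyclicGraphEdges (∀ i, G i)) := fun x =>
    ⟨(mk x.1 x.2.1.1.1 (fun j => (x.2.2 j).1), mk x.1 x.2.1.1.2 (fun j => (x.2.2 j).1)),
      hΦ x⟩ with hΦdef
  have hbij : Function.Bijective Φ := by
    constructor
    · rintro ⟨i, a, c⟩ ⟨i', a', c'⟩ h
      have h1 : mk i a.1.1 (fun j => (c j).1) = mk i' a'.1.1 (fun j => (c' j).1) :=
        congrArg (fun p => p.1.1) h
      have h2 : mk i a.1.2 (fun j => (c j).1) = mk i' a'.1.2 (fun j => (c' j).1) :=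
        congrArg (fun p => p.1.2) h
      have hc1 : ∀ k, (mk i a.1.1 (fun j => (c j).1)).map (Pi.evalMonoidHom G k) =
          (mk i' a'.1.1 (fun j => (c' j).1)).map (Pi.evalMonoidHom G k) :=
        fun k => by rw [h1]
      have hc2 : ∀ k, (mk i a.1.2 (fun j => (c j).1)).map (Pi.evalMonoidHom G k) =
          (mk i' a'.1.2 (fun j => (c' j).1)).map (Pi.evalMonoidHom G k) :=
        fun k => by rw [h2]
      by_cases hii : i = i'
      · subst hii
        have ha : a = a' := by
          apply Subtype.ext
          apply Prod.ext
          · have := hc1 i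
            rwa [mk_map, mk_map, splitsame, splitsame] at this
          · have := hc2 i
            rwa [mk_map, mk_map, splitsame, splitsame] at this
        have hc : c = c' := by
          funext j
          apply Subtype.ext
          have := hc1 j
          rw [mk_map, mk_map, splitne i _ _ j j.2, splitne i _ _ j j.2] at this
          exact this
        rw [ha, hc]
      · exfalso
        -- at coordinate i: left side has a.1.1 < a.1.2 hence distinct,
        -- right side has equal components
        have hlt : a.1.1 < a.1.2 := a.2.2.2.1
        have he1 := hc1 i
        have he2 := hc2 i
        rw [mk_map, mk_map, splitsame, splitne i' _ _ i hii] at he1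
        rw [mk_map, mk_map, splitsame, splitne i' _ _ i hii] at he2
        exact hlt.ne (he1.trans he2.symm)
    · rintro ⟨⟨A, B⟩, hmem⟩
      rw [myEdge_iff hcop] at hmem
      obtain ⟨i, hedge, hrest⟩ := hmem
      refine ⟨⟨i, ⟨(A.map (Pi.evalMonoidHom G i), B.map (Pi.evalMonoidHom G i)), hedge⟩,
        fun j => ⟨A.map (Pi.evalMonoidHom G (j : ι)), (hrest j j.2).2⟩⟩, ?_⟩
      apply Subtype.ext
      apply Prod.ext
      · show mk i _ _ = A
        conv_rhs => rw [myEq_pi hcop A]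
        rw [hmk]
        dsimp only
        congr 1
        funext k
        by_cases h : k = i
        · subst h; rw [splitsame]
        · rw [splitne i _ _ k h]
      · show mk i _ _ = B
        conv_rhs => rw [myEq_pi hcop B]
        rw [hmk]
        dsimp only
        congr 1
        funext k
        by_cases h : k = i
        · subst h; rw [splitsame]
        · rw [splitne i _ _ k h]
          exact (hrest k h).1
  -- now count
  rw [← Nat.card_congr (Equiv.ofBijective Φ hbij)]
  haveI : ∀ i : ι, Fintype (Subgroup (G i)) := fun i => Fintype.ofFinite _
  haveI : ∀ i : ι, Fintype (cyclicGraphEdges (G i)) := fun i => Fintype.ofFinite _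
  haveI : ∀ i : ι, Fintype {H : Subgroup (G i) | IsCyclic H} := fun i => Fintype.ofFinite _
  rw [hS, Nat.card_eq_fintype_card, Fintype.card_sigma]
  refine Finset.sum_congr rfl fun i _ => ?_
  rw [Fintype.card_prod, Fintype.card_pi, Nat.card_eq_fintype_card]
  congr 1
  have hprod : (∏ j ∈ Finset.univ.erase i, Nat.card {H : Subgroup (G j) | IsCyclic H})
      = ∏ j : {j : ι // j ≠ i}, Nat.card {H : Subgroup (G (j : ι)) | IsCyclic H} :=
    Finset.prod_subtype (Finset.univ.erase i) (fun x => by simp) _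
  rw [hprod]
  exact Finset.prod_congr rfl fun j _ => Nat.card_eq_fintype_card.symm


end pi

theorem numCyclicEdges_pi {ι : Type*} [Fintype ι] (G : ι → Type*)
    [∀ i, Group (G i)] [∀ i, Finite (G i)]
    (hcop : Pairwise fun i j => Nat.Coprime (Nat.card (G i)) (Nat.card (G j))) :
    (numCyclicEdges (∀ i, G i) : ℚ) =
      (∑ i, (numCyclicEdges (G i) : ℚ) / Nat.card {H : Subgroup (G i) | IsCyclic H}) *
        ∏ i, (Nat.card {H : Subgroup (G i) | IsCyclic H} : ℚ) := by
  classical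
  have hcard := myCard_edges hcop
  have hCpos : ∀ i, (0 : ℚ) < (Nat.card {H : Subgroup (G i) | IsCyclic H} : ℚ) := by
    intro i
    have hbot : IsCyclic ((⊥ : Subgroup (G i)) : Subgroup (G i)) := Bot.isCyclic
    have hne : Nonempty {H : Subgroup (G i) | IsCyclic H} := ⟨⟨⊥, hbot⟩⟩
    have hfin : Finite {H : Subgroup (G i) | IsCyclic H} := inferInstance
    exact_mod_cast Nat.card_pos
  simp only [numCyclicEdges]
  rw [hcard]
  push_cast
  rw [Finset.sum_mul]
  refine Finset.sum_congr rfl fun i _ => ?_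
  rw [← Finset.mul_prod_erase Finset.univ
    (fun j => (Nat.card {H : Subgroup (G j) | IsCyclic H} : ℚ)) (Finset.mem_univ i),
    ← mul_assoc, div_mul_cancel₀ _ (hCpos i).ne']
end

section
/- For a finite p-group G of order p^m, the number of cyclic subgroups of G is at least m + 1, with equality if and only if G is cyclic. -/
private lemma geom_aux {p : ℕ} (hp : 2 ≤ p) (m : ℕ) :
    (p - 1) * ∑ k ∈ Finset.range m, p ^ k + 1 = p ^ m := by
  induction m with
  | zero => simp
  | succ n ih =>
    rw [Finset.sum_range_succ, Nat.mul_add]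
    have h1 : (p - 1) * p ^ n = p * p ^ n - p ^ n := by rw [Nat.sub_one_mul]
    have h2 : p ^ n ≤ p * p ^ n := Nat.le_mul_of_pos_left _ (by omega)
    rw [pow_succ, mul_comm (p ^ n) p]
    omega

private lemma key_lemma {p : ℕ} (hp : 2 ≤ p) :
    ∀ N : ℕ, ∀ s : Multiset ℕ, ∀ m : ℕ, Multiset.card s = N →
      (s.map (p ^ ·)).sum = ∑ k ∈ Finset.range m, p ^ k →
      m ≤ Multiset.card s ∧ (Multiset.card s = m → m = 0 ∨ (m - 1) ∈ s) := by
  intro N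
  induction N using Nat.strong_induction_on with
  | _ N ih =>
    intro s m hcard hsum
    rcases Nat.eq_zero_or_pos m with rfl | hm
    · exact ⟨Nat.zero_le _, fun _ => Or.inl rfl⟩
    classical
    by_cases hbig : ∃ k ∈ s.toFinset, p ≤ s.count k
    · obtain ⟨k, -, hpk⟩ := hbig
      obtain ⟨t, ht⟩ := Multiset.le_iff_exists_add.mp
        (Multiset.le_count_iff_replicate_le.mp hpk)
      have hsum' : (((k+1) ::ₘ t).map (p ^ ·)).sum = ∑ k ∈ Finset.range m, p ^ k := by
        rw [← hsum, ht]
        simp [Multiset.sum_replicate, pow_succ, mul_comm, smul_eq_mul]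
      have hcardt : Multiset.card s = p + Multiset.card t := by rw [ht]; simp
      have hlt : Multiset.card ((k+1) ::ₘ t) < N := by
        simp only [Multiset.card_cons]; omega
      obtain ⟨h1, -⟩ := ih _ hlt ((k+1) ::ₘ t) m rfl hsum'
      simp only [Multiset.card_cons] at h1
      constructor
      · omega
      · intro h; omega
    · push_neg at hbig
      -- every element of s is < m
      have hlt : ∀ b ∈ s, b < m := by
        intro b hb
        have h1 : p ^ b ≤ (s.map (p ^ ·)).sum :=
          Multiset.single_le_sum (fun x _ => Nat.zero_le x) _ (Multiset.mem_map_of_mem _ hb)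
        have h2 : ∑ k ∈ Finset.range m, p ^ k < p ^ m := by
          have := geom_aux hp m
          have h3 : ∑ k ∈ Finset.range m, p ^ k ≤ (p - 1) * ∑ k ∈ Finset.range m, p ^ k :=
            Nat.le_mul_of_pos_left _ (by omega)
          omega
        have : p ^ b < p ^ m := by omega
        exact (Nat.pow_lt_pow_iff_right (by omega)).mp this
      have hmem : m - 1 ∈ s := by
        by_contra hne
        have hsub : s.toFinset ⊆ Finset.range (m - 1) := by
          intro b hb
          rw [Finset.mem_range]
          have hbs := Multiset.mem_toFinset.mp hb
          have := hlt b hbs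
          have hb2 : b ≠ m - 1 := fun h => hne (h ▸ hbs)
          omega
        have heq : (s.map (p ^ ·)).sum = ∑ k ∈ s.toFinset, s.count k • p ^ k :=
          Finset.sum_multiset_map_count s _
        have hb1 : ∑ k ∈ s.toFinset, s.count k • p ^ k
            ≤ ∑ k ∈ Finset.range (m-1), (p - 1) * p ^ k := by
          apply le_trans (Finset.sum_le_sum_of_subset hsub)
          apply Finset.sum_le_sum
          intro k hk
          by_cases hks : k ∈ s.toFinset
          · have := hbig k hks
            simp only [smul_eq_mul]
            exact Nat.mul_le_mul_right _ (by omega)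
          · simp [Multiset.count_eq_zero_of_notMem (fun h => hks (Multiset.mem_toFinset.mpr h))]
        rw [← Finset.mul_sum] at hb1
        have hg := geom_aux hp (m - 1)
        have hlast : p ^ (m - 1) ≤ ∑ k ∈ Finset.range m, p ^ k :=
          Finset.single_le_sum (fun k _ => Nat.zero_le _)
            (Finset.mem_range.mpr (by omega))
        omega
      obtain ⟨t, rfl⟩ := Multiset.exists_cons_of_mem hmem
      have hsum' : (t.map (p ^ ·)).sum = ∑ k ∈ Finset.range (m - 1), p ^ k := by
        have hss := Finset.sum_range_succ (fun k => p ^ k) (m - 1)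
        rw [show m - 1 + 1 = m by omega] at hss
        simp only [Multiset.map_cons, Multiset.sum_cons] at hsum
        omega
      have hlt2 : Multiset.card t < N := by
        rw [← hcard]; simp
      obtain ⟨h1, -⟩ := ih _ hlt2 t (m - 1) rfl hsum'
      simp only [Multiset.card_cons]
      exact ⟨by omega, fun _ => Or.inr (Multiset.mem_cons_self _ _)⟩

theorem card_cyclic_subgroups_pGroup (G : Type*) [Group G] [Finite G]
    (p m : ℕ) (hp : p.Prime) (hcard : Nat.card G = p ^ m) :
    m + 1 ≤ Nat.card {H : Subgroup G | IsCyclic H} ∧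
    (Nat.card {H : Subgroup G | IsCyclic H} = m + 1 ↔ IsCyclic G) := by
  classical
  cases nonempty_fintype G
  have hp2 : 2 ≤ p := hp.two_le
  -- the finset of cyclic subgroups
  set C : Finset (Subgroup G) := Finset.univ.image (fun g : G => Subgroup.zpowers g) with hC
  have zpow_cyclic : ∀ g : G, IsCyclic (Subgroup.zpowers g) := by
    intro g
    refine ⟨⟨g, Subgroup.mem_zpowers g⟩, fun x => ?_⟩
    obtain ⟨n, hn⟩ := Subgroup.mem_zpowers_iff.mp x.2
    exact Subgroup.mem_zpowers_iff.mpr ⟨n, by ext; simpa using hn⟩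
  have hmemC : ∀ H : Subgroup G, H ∈ C ↔ IsCyclic H := by
    intro H
    constructor
    · intro hH
      obtain ⟨g, -, rfl⟩ := Finset.mem_image.mp hH
      exact zpow_cyclic g
    · intro hcyc
      obtain ⟨g, hg⟩ := IsCyclic.exists_generator (α := H)
      have hgen : Subgroup.zpowers (g : G) = H := by
        have h1 := MonoidHom.map_zpowers H.subtype g
        rw [(Subgroup.eq_top_iff' _).mpr hg, ← MonoidHom.range_eq_map,
          Subgroup.range_subtype] at h1
        simpa using h1.symm
      exact Finset.mem_image.mpr ⟨(g : G), Finset.mem_univ _, hgen⟩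
  have hNatcard : Nat.card {H : Subgroup G | IsCyclic H} = C.card := by
    rw [Nat.card_coe_set_eq]
    have hset : {H : Subgroup G | IsCyclic H} = ↑C := by
      ext H; simp only [Set.mem_setOf_eq, Finset.coe_sort_coe, Finset.mem_coe, hmemC]
    rw [hset, Set.ncard_coe_finset]
  -- fiber counting
  have hfib : ∀ H ∈ C, (Finset.univ.filter (fun g : G => Subgroup.zpowers g = H)).card
      = (Nat.card H).totient := by
    intro H hH
    haveI : IsCyclic H := (hmemC H).mp hH
    have htot := IsCyclic.card_orderOf_eq_totient (α := H) (d := Fintype.card H) dvd_rfl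
    rw [Nat.card_eq_fintype_card (α := H), ← htot]
    have himg : Finset.univ.filter (fun g : G => Subgroup.zpowers g = H)
        = (Finset.univ.filter (fun h : H => orderOf h = Fintype.card H)).image
            (fun h : H => (h : G)) := by
      ext g
      simp only [Finset.mem_filter, Finset.mem_image, Finset.mem_univ, true_and]
      constructor
      · intro hg
        have hgH : g ∈ H := hg ▸ Subgroup.mem_zpowers g
        refine ⟨⟨g, hgH⟩, ?_, rfl⟩
        rw [Subgroup.orderOf_mk, ← Nat.card_eq_fintype_card (α := H), ← hg, Nat.card_zpowers]
      · rintro ⟨h, hord, rfl⟩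
        have hle : Subgroup.zpowers (h : G) ≤ H := Subgroup.zpowers_le.mpr h.2
        have hcard2 : Nat.card H ≤ Nat.card (Subgroup.zpowers (h : G)) := by
          rw [Nat.card_zpowers, Subgroup.orderOf_coe, hord, Nat.card_eq_fintype_card (α := H)]
        exact (Subgroup.eq_of_le_of_card_ge hle hcard2)
    rw [himg, Finset.card_image_of_injective _ Subtype.coe_injective]
  have hGsum : p ^ m = ∑ H ∈ C, (Nat.card H).totient := by
    rw [← hcard, Nat.card_eq_fintype_card, ← Finset.card_univ,
      Finset.card_eq_sum_card_fiberwise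
        (f := fun g : G => Subgroup.zpowers g) (t := C)
        (fun g _ => Finset.mem_image_of_mem _ (Finset.mem_univ g))]
    exact Finset.sum_congr rfl hfib
  -- exponent function
  have ha : ∀ H : Subgroup G, Nat.card (H : Subgroup G) = p ^ ((Nat.card H).factorization p) := by
    intro H
    obtain ⟨k, -, hk⟩ := (Nat.dvd_prime_pow hp).1 (hcard ▸ Subgroup.card_subgroup_dvd_card H)
    rw [hk, hp.factorization_pow]
    simp
  have hbot : ⊥ ∈ C :=
    Finset.mem_image.mpr ⟨1, Finset.mem_univ 1, Subgroup.zpowers_one_eq_bot⟩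
  have hsum2 : p ^ m = 1 + ∑ H ∈ C.erase ⊥, (Nat.card (H : Subgroup G)).totient := by
    rw [hGsum, ← Finset.add_sum_erase _ _ hbot, Subgroup.card_bot]
    simp
  -- rewrite each totient
  set b : Subgroup G → ℕ := fun H => (Nat.card (H : Subgroup G)).factorization p - 1 with hb
  have htotsum : ∑ H ∈ C.erase ⊥, (Nat.card (H : Subgroup G)).totient
      = (p - 1) * ∑ H ∈ C.erase ⊥, p ^ (b H) := by
    rw [Finset.mul_sum]
    apply Finset.sum_congr rfl
    intro H hH
    have hHne : H ≠ ⊥ := (Finset.mem_erase.mp hH).1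
    have hk1 : 1 ≤ (Nat.card (H : Subgroup G)).factorization p := by
      by_contra hk0
      have : (Nat.card (H : Subgroup G)).factorization p = 0 := by omega
      have hcard1 : Nat.card (H : Subgroup G) = 1 := by rw [ha H, this, pow_zero]
      exact hHne (Subgroup.card_eq_one.mp hcard1)
    conv_lhs => rw [ha H]
    rw [Nat.totient_prime_pow hp (by omega), mul_comm]
  -- the multiset of exponents
  set s : Multiset ℕ := (C.erase ⊥).val.map b with hs
  have hscard : Multiset.card s = C.card - 1 := by
    rw [hs, Multiset.card_map]
    exact Finset.card_erase_of_mem hbot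
  have hssum : (s.map (p ^ ·)).sum = ∑ k ∈ Finset.range m, p ^ k := by
    have h2 : (s.map (p ^ ·)).sum = ∑ H ∈ C.erase ⊥, p ^ (b H) := by
      rw [hs, Multiset.map_map]
      rfl
    have h1 : (p - 1) * (s.map (p ^ ·)).sum = (p - 1) * ∑ k ∈ Finset.range m, p ^ k := by
      rw [h2, ← htotsum]
      have hg := geom_aux hp2 m
      have h4 : (p - 1) * ∑ k ∈ Finset.range m, p ^ k
          = ∑ H ∈ C.erase ⊥, (Nat.card (H : Subgroup G)).totient := by omega
      rw [h4]
    exact Nat.eq_of_mul_eq_mul_left (by omega) h1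
  have hkey := key_lemma hp2 (Multiset.card s) s m rfl hssum
  have hCpos : 1 ≤ C.card := Finset.card_pos.mpr ⟨⊥, hbot⟩
  have hlow : m + 1 ≤ C.card := by omega
  refine ⟨by rw [hNatcard]; exact hlow, ?_, ?_⟩
  · -- equality → cyclic
    intro heq
    rw [hNatcard] at heq
    have hcards : Multiset.card s = m := by omega
    rcases hkey.2 hcards with hm0 | hmem
    · subst hm0
      have : Nat.card G = 1 := by simpa using hcard
      haveI : Subsingleton G := (Nat.card_eq_one_iff_unique.mp this).1
      infer_instance
    · have hm1 : 1 ≤ m := by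
        by_contra h0
        have hm0 : m = 0 := by omega
        rw [hm0] at hcards
        rw [Multiset.card_eq_zero.mp hcards] at hmem
        simp at hmem
      rw [hs] at hmem
      obtain ⟨H, hH, hbH⟩ := Multiset.mem_map.mp hmem
      have hHC : H ∈ C.erase ⊥ := hH
      have hHne : (H : Subgroup G) ≠ ⊥ := (Finset.mem_erase.mp hHC).1
      have hk1 : 1 ≤ (Nat.card (H : Subgroup G)).factorization p := by
        by_contra hk0
        have h0 : (Nat.card (H : Subgroup G)).factorization p = 0 := by omega
        exact hHne (Subgroup.card_eq_one.mp (by rw [ha H, h0, pow_zero]))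
      have hbH' : (Nat.card (H : Subgroup G)).factorization p - 1 = m - 1 := hbH
      have hHcard : Nat.card (H : Subgroup G) = Nat.card G := by
        rw [hcard, ha H]
        congr 1
        omega
      have hHtop : (H : Subgroup G) = ⊤ := Subgroup.eq_top_of_card_eq _ hHcard
      haveI hHcyc : IsCyclic (H : Subgroup G) := (hmemC H).mp (Finset.mem_of_mem_erase hHC)
      rw [hHtop] at hHcyc
      exact isCyclic_of_surjective (Subgroup.topEquiv (G := G)) Subgroup.topEquiv.surjective
  · -- cyclic → equality
    intro hcyc
    rw [hNatcard]
    refine le_antisymm ?_ hlow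
    -- subgroups of a cyclic group are determined by their cardinality
    have huniq : ∀ H K : Subgroup G, Nat.card (H : Subgroup G) = Nat.card K → H = K := by
      intro H K hHK
      have key : ∀ L : Subgroup G, Finset.univ.filter (fun a : G => a ∈ L)
          = Finset.univ.filter (fun a : G => a ^ Nat.card (L : Subgroup G) = 1) := by
        intro L
        apply Finset.eq_of_subset_of_card_le
        · intro a hma
          simp only [Finset.mem_filter, Finset.mem_univ, true_and] at hma ⊢
          have h5 : (⟨a, hma⟩ : L) ^ Nat.card (L : Subgroup G) = 1 := pow_card_eq_one'
          have h6 := congrArg (Subtype.val) h5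
          rw [SubmonoidClass.coe_pow] at h6
          exact h6
        · haveI := hcyc
          have h1 : (Finset.univ.filter (fun a : G => a ^ Nat.card (L : Subgroup G) = 1)).card
              ≤ Nat.card (L : Subgroup G) :=
            IsCyclic.card_pow_eq_one_le (Nat.card_pos (α := L))
          have h2 : (Finset.univ.filter (fun a : G => a ∈ L)).card = Nat.card (L : Subgroup G) := by
            rw [Nat.card_eq_fintype_card (α := L), Fintype.card_subtype]
          omega
      have h3 := key H
      rw [hHK, ← key K] at h3
      ext a
      have := Finset.ext_iff.mp h3 a
      simpa using this
    haveI : Finite (Subgroup G) :=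
      Finite.of_injective (fun H : Subgroup G => (H : Set G)) SetLike.coe_injective
    haveI := Fintype.ofFinite (Subgroup G)
    have hinj : Function.Injective
        (fun H : Subgroup G => (⟨(Nat.card (H : Subgroup G)).factorization p, by
          have hdvd : Nat.card (H : Subgroup G) ∣ p ^ m := hcard ▸ Subgroup.card_subgroup_dvd_card H
          rw [ha H] at hdvd
          have := (Nat.pow_dvd_pow_iff_le_right (by omega)).mp hdvd
          omega⟩ : Fin (m + 1))) := by
      intro H K hHK
      simp only [Fin.mk.injEq] at hHK
      exact huniq H K (by rw [ha H, ha K, hHK])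
    have hle : Fintype.card (Subgroup G) ≤ m + 1 := by
      simpa using Fintype.card_le_of_injective _ hinj
    calc C.card ≤ Fintype.card (Subgroup G) := Finset.card_le_univ C
      _ ≤ m + 1 := hle
end
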